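/- Let G be a directed Eulerian graph without parallel edges or self-loops in which every node v satisfies d(v) = 1, or d(v) = 2 and v is a cut node of U(G). Then the number of Eulerian circuits of G (counted up to cyclic rotation) equals 1; in particular, via the BEST theorem formula ε(G) = t(G) · ∏_v (d(v) − 1)!, one has t(G) = 1 and (d(v) − 1)! = 1 for all v. -/

import Mathlib

/-- The underlying undirected simple graph of a directed graph `E` (no self-loops). -/
def underlyingUG {V : Type*} (E : V → V → Prop) : SimpleGraph V where
  Adj a b := a ≠ b ∧ (E a b ∨ E b a)
  symm := ⟨fun a b h => ⟨h.1.symm, h.2.symm⟩⟩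
  loopless := ⟨fun a h => h.1 rfl⟩

/-- Out-degree of `v`: number of out-neighbors. -/
noncomputable def outdeg {V : Type*} (E : V → V → Prop) (v : V) : ℕ := Set.ncard {w | E v w}

/-- In-degree of `v`: number of in-neighbors. -/
noncomputable def indeg {V : Type*} (E : V → V → Prop) (v : V) : ℕ := Set.ncard {u | E u v}

/-- The cyclic sequence of consecutive pairs of a circuit given as a vertex list. -/
def cyclicPairs {V : Type*} (c : List V) : List (V × V) := c.zip (c.rotate 1)

/-- `c` is an Eulerian circuit: a nonempty closed walk using every edge exactly once. -/
def IsEulerianCircuit {V : Type*} (E : V → V → Prop) (c : List V) : Prop :=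
  c ≠ [] ∧ (cyclicPairs c).Nodup ∧ ∀ p : V × V, p ∈ cyclicPairs c ↔ E p.1 p.2

/-- The walk `q` appears (cyclically, as consecutive edges) in the circuit `c`. -/
def Appears {V : Type*} (q c : List V) : Prop :=
  ∃ k, (q.zip q.tail) <:+: cyclicPairs (c.rotate k)

/-- `v` is a cut node of the connected undirected graph `H`. -/
def IsCutNode {V : Type*} (H : SimpleGraph V) (v : V) : Prop :=
  ¬ (H.induce {u | u ≠ v}).Connected

/-- The underlying undirected graph with node `v` (and incident edges) removed. -/
def delNode {V : Type*} (E : V → V → Prop) (v : V) := (underlyingUG E).induce {u | u ≠ v}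

/-- `v ∈ A(G)`: `d(v) = 1`, or `d(v) = 2` and `v` is a cut node of `U(G)`. -/
def inA {V : Type*} (E : V → V → Prop) (v : V) : Prop :=
  outdeg E v = 1 ∨ (outdeg E v = 2 ∧ IsCutNode (underlyingUG E) v)

/-- `T` is an arborescence of `E` rooted at `r` and directed towards `r`:
every node other than `r` has out-degree exactly one in `T`, `r` has out-degree zero,
and every node reaches `r` by a directed path in `T`. -/
def IsArborescenceTowards {V : Type*} (E : V → V → Prop) (r : V) (T : Set (V × V)) : Prop :=
  (∀ p ∈ T, E p.1 p.2) ∧ (∀ x : V, x ≠ r → ∃! y : V, (x, y) ∈ T) ∧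
  (∀ y : V, (r, y) ∉ T) ∧ ∀ x : V, Relation.ReflTransGen (fun a b => (a, b) ∈ T) x r


section CycInfra
variable {V : Type*}

def cyc (c : List V) (hc : c ≠ []) (i : ℕ) : V :=
  c.get ⟨i % c.length, Nat.mod_lt _ (List.length_pos_iff.mpr hc)⟩

lemma cyc_congr {c : List V} (hc : c ≠ []) {i j : ℕ} (h : i % c.length = j % c.length) :
    cyc c hc i = cyc c hc j := by simp only [cyc, h]

lemma cyc_mod_add {c : List V} (hc : c ≠ []) (i k : ℕ) :
    cyc c hc (i % c.length + k) = cyc c hc (i + k) :=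
  cyc_congr hc (by rw [Nat.add_mod, Nat.mod_mod_of_dvd _ dvd_rfl, ← Nat.add_mod])

lemma cyc_mod {c : List V} (hc : c ≠ []) (i : ℕ) :
    cyc c hc (i % c.length) = cyc c hc i :=
  cyc_congr hc (Nat.mod_mod_of_dvd _ dvd_rfl)

lemma cyc_add_len {c : List V} (hc : c ≠ []) (i : ℕ) : cyc c hc (i + c.length) = cyc c hc i :=
  cyc_congr hc (by simp)

lemma cyc_add_mul {c : List V} (hc : c ≠ []) (i k : ℕ) :
    cyc c hc (i + c.length * k) = cyc c hc i :=
  cyc_congr hc (by simp [Nat.add_mul_mod_self_left])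

lemma length_cyclicPairs (c : List V) : (cyclicPairs c).length = c.length := by
  simp [cyclicPairs]

lemma cyclicPairs_getElem {c : List V} (hc : c ≠ []) (i : ℕ) (h : i < (cyclicPairs c).length) :
    (cyclicPairs c)[i] = (cyc c hc i, cyc c hc (i + 1)) := by
  have hn : i < c.length := by simpa [length_cyclicPairs] using h
  have h1 : i % c.length = i := Nat.mod_eq_of_lt hn
  simp [cyclicPairs, List.getElem_zip, List.getElem_rotate, cyc, h1,
    List.get_eq_getElem]

lemma mem_cyclicPairs {c : List V} (hc : c ≠ []) (p : V × V) :
    p ∈ cyclicPairs c ↔ ∃ i < c.length, p = (cyc c hc i, cyc c hc (i + 1)) := by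
  rw [List.mem_iff_getElem]
  constructor
  · rintro ⟨i, h, rfl⟩
    exact ⟨i, by simpa [length_cyclicPairs] using h, (cyclicPairs_getElem hc i h)⟩
  · rintro ⟨i, h, rfl⟩
    exact ⟨i, by simpa [length_cyclicPairs] using h,
      (cyclicPairs_getElem hc i (by simpa [length_cyclicPairs] using h))⟩

variable {E : V → V → Prop}

lemma edge_cyc {c : List V} (h : IsEulerianCircuit E c) (i : ℕ) :
    E (cyc c h.1 i) (cyc c h.1 (i + 1)) := by
  have hn : 0 < c.length := List.length_pos_iff.mpr h.1
  have hmem : (cyc c h.1 i, cyc c h.1 (i + 1)) ∈ cyclicPairs c := by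
    refine (mem_cyclicPairs h.1 _).mpr ⟨i % c.length, Nat.mod_lt _ hn, ?_⟩
    rw [cyc_mod h.1 i, cyc_mod_add h.1 i 1]
  exact (h.2.2 (cyc c h.1 i, cyc c h.1 (i + 1))).mp hmem

lemma edge_iff {c : List V} (h : IsEulerianCircuit E c) (a b : V) :
    E a b ↔ ∃ i < c.length, a = cyc c h.1 i ∧ b = cyc c h.1 (i + 1) := by
  rw [← h.2.2 (a, b), mem_cyclicPairs h.1]
  simp [Prod.ext_iff]

lemma cyc_succ_inj {c : List V} (h : IsEulerianCircuit E c) {p q : ℕ}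
    (hpq : p % c.length ≠ q % c.length) (hv : cyc c h.1 p = cyc c h.1 q) :
    cyc c h.1 (p + 1) ≠ cyc c h.1 (q + 1) := by
  intro heq
  apply hpq
  have hn : 0 < c.length := List.length_pos_iff.mpr h.1
  have hp : p % c.length < (cyclicPairs c).length := by
    rw [length_cyclicPairs]; exact Nat.mod_lt _ hn
  have hq : q % c.length < (cyclicPairs c).length := by
    rw [length_cyclicPairs]; exact Nat.mod_lt _ hn
  refine (h.2.1.getElem_inj_iff (hi := hp) (hj := hq)).mp ?_
  rw [cyclicPairs_getElem h.1 _ hp, cyclicPairs_getElem h.1 _ hq,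
    cyc_mod h.1 p, cyc_mod h.1 q, cyc_mod_add h.1 p 1, cyc_mod_add h.1 q 1, hv, heq]

lemma cyc_rotate {c : List V} (hc : c ≠ []) (k : ℕ) (hr : c.rotate k ≠ []) (t : ℕ) :
    cyc (c.rotate k) hr t = cyc c hc (t + k) := by
  have step : cyc (c.rotate k) hr t = cyc c hc (t % c.length + k) := by
    unfold cyc
    simp only [List.get_eq_getElem, List.getElem_rotate, List.length_rotate]
  exact step.trans (cyc_mod_add hc t k)

lemma cyclicPairs_rotate (c : List V) (k : ℕ) :
    cyclicPairs (c.rotate k) = (cyclicPairs c).rotate k := by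
  rcases eq_or_ne c [] with rfl | hc
  · simp [cyclicPairs]
  have hn : 0 < c.length := List.length_pos_iff.mpr hc
  have hr : c.rotate k ≠ [] := by
    simp [← List.length_pos_iff, List.length_rotate, hn]
  apply List.ext_getElem
  · simp [length_cyclicPairs]
  intro i h1 h2
  have hi : i < c.length := by simpa [length_cyclicPairs] using h1
  rw [cyclicPairs_getElem hr i h1, List.getElem_rotate]
  have hlen : (i + k) % (cyclicPairs c).length < (cyclicPairs c).length := by
    rw [length_cyclicPairs]; exact Nat.mod_lt _ hn
  rw [cyclicPairs_getElem hc _ hlen]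
  rw [cyc_rotate hc k hr i, cyc_rotate hc k hr (i+1)]
  simp only [length_cyclicPairs]
  rw [cyc_mod hc (i+k), cyc_mod_add hc (i+k) 1, Nat.add_right_comm i 1 k]

lemma euler_rotate {c : List V} (h : IsEulerianCircuit E c) (k : ℕ) :
    IsEulerianCircuit E (c.rotate k) := by
  refine ⟨?_, ?_, ?_⟩
  · simp [← List.length_pos_iff, List.length_rotate, List.length_pos_iff.mpr h.1]
  · rw [cyclicPairs_rotate]; exact List.nodup_rotate.mpr h.2.1
  · intro p; rw [cyclicPairs_rotate, List.mem_rotate]; exact h.2.2 p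

lemma euler_length_eq {c c' : List V} (h : IsEulerianCircuit E c) (h' : IsEulerianCircuit E c') :
    c.length = c'.length := by
  have hp : List.Perm (cyclicPairs c) (cyclicPairs c') :=
    (List.perm_ext_iff_of_nodup h.2.1 h'.2.1).mpr (fun p => by rw [h.2.2, h'.2.2])
  have := hp.length_eq
  rwa [length_cyclicPairs, length_cyclicPairs] at this

end CycInfra

section Reach
variable {V : Type*}

def Avoid (E : V → V → Prop) (v : V) (a b : V) : Prop :=
  a ≠ v ∧ b ≠ v ∧ (underlyingUG E).Adj a b

lemma avoid_symm (E : V → V → Prop) (v : V) : Symmetric (Avoid E v) :=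
  fun _ _ h => ⟨h.2.1, h.1, h.2.2.symm⟩

lemma rv_symm {E : V → V → Prop} {v a b : V} (h : Relation.ReflTransGen (Avoid E v) a b) :
    Relation.ReflTransGen (Avoid E v) b a :=
  haveI : Std.Symm (Avoid E v) := ⟨fun _ _ hab => avoid_symm E v hab⟩
  Std.Symm.symm (r := Relation.ReflTransGen (Avoid E v)) _ _ h

lemma rv_reach {E : V → V → Prop} {v a b : V} (hb : b ≠ v)
    (h : Relation.ReflTransGen (Avoid E v) a b) :
    ∀ ha : a ≠ v, ((underlyingUG E).induce {u | u ≠ v}).Reachable ⟨a, ha⟩ ⟨b, hb⟩ := by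
  induction h using Relation.ReflTransGen.head_induction_on with
  | refl => exact fun _ => SimpleGraph.Reachable.refl _
  | head step tail ih =>
      intro ha
      have hc := step.2.1
      have hadj : ((underlyingUG E).induce {u | u ≠ v}).Adj ⟨_, ha⟩ ⟨_, hc⟩ := step.2.2
      exact (SimpleGraph.Adj.reachable hadj).trans (ih hc)

lemma not_cut {E : V → V → Prop} {v y0 : V} (hy0 : y0 ≠ v)
    (hall : ∀ w, w ≠ v → Relation.ReflTransGen (Avoid E v) w y0) :
    ¬ IsCutNode (underlyingUG E) v := by
  intro hcut
  apply hcut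
  rw [SimpleGraph.connected_iff]
  refine ⟨?_, ⟨⟨y0, hy0⟩⟩⟩
  rintro ⟨a, ha⟩ ⟨b, hb⟩
  exact (rv_reach hy0 (hall a ha) ha).trans (rv_reach hy0 (hall b hb) hb).symm

variable {E : V → V → Prop}

lemma exists_cyc_eq {c : List V} (h : IsEulerianCircuit E c) (v : V) (hout : outdeg E v ≠ 0) :
    ∃ t < c.length, cyc c h.1 t = v := by
  obtain ⟨w, hw⟩ := Set.nonempty_of_ncard_ne_zero hout
  obtain ⟨i, hi, hva, -⟩ := (edge_iff h v w).mp hw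
  exact ⟨i, hi, hva.symm⟩

lemma stretch {c : List V} (h : IsEulerianCircuit E c) (hloop : ∀ x, ¬ E x x) (v : V) :
    ∀ d a, (∀ t, a ≤ t → t ≤ a + d → cyc c h.1 t ≠ v) →
      Relation.ReflTransGen (Avoid E v) (cyc c h.1 a) (cyc c h.1 (a + d)) := by
  intro d
  induction d with
  | zero => intro a _; exact Relation.ReflTransGen.refl
  | succ d ih =>
      intro a hfree
      have h1 := ih a (fun t h1 h2 => hfree t h1 (by omega))
      refine h1.tail ?_
      have he := edge_cyc h (a + d)
      have hne : cyc c h.1 (a + d) ≠ cyc c h.1 (a + d + 1) := by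
        intro heq; rw [heq] at he; exact hloop _ he
      exact ⟨hfree _ (by omega) (by omega), hfree _ (by omega) (by omega), hne, Or.inl he⟩

lemma reach_from_exit {c : List V} (h : IsEulerianCircuit E c) (hloop : ∀ x, ¬ E x x) {v : V}
    (i0 : ℕ) (hv : cyc c h.1 i0 = v) :
    ∀ m, cyc c h.1 (i0 + m) ≠ v →
      ∃ y, E v y ∧ Relation.ReflTransGen (Avoid E v) y (cyc c h.1 (i0 + m)) := by
  intro m
  induction m with
  | zero => intro hne; exact absurd hv hne
  | succ m ih =>
      intro hne
      by_cases hm : cyc c h.1 (i0 + m) = v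
      · refine ⟨cyc c h.1 (i0 + m + 1), ?_, Relation.ReflTransGen.refl⟩
        have he := edge_cyc h (i0 + m); rwa [hm] at he
      · obtain ⟨y, hy, hr⟩ := ih hm
        refine ⟨y, hy, hr.tail ?_⟩
        have he := edge_cyc h (i0 + m)
        have hne2 : cyc c h.1 (i0 + m) ≠ cyc c h.1 (i0 + m + 1) := by
          intro heq; rw [heq] at he; exact hloop _ he
        exact ⟨hm, hne, hne2, Or.inl he⟩

lemma exit_reaches {c : List V} (h : IsEulerianCircuit E c) (hloop : ∀ x, ¬ E x x)
    (hA' : ∀ x, outdeg E x ≠ 0) (v w : V) (hw : w ≠ v) :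
    ∃ y, E v y ∧ Relation.ReflTransGen (Avoid E v) y w := by
  obtain ⟨i0, _, hi0⟩ := exists_cyc_eq h v (hA' v)
  obtain ⟨j, _, hj⟩ := exists_cyc_eq h w (hA' w)
  have hn : 0 < c.length := List.length_pos_iff.mpr h.1
  have hle : i0 ≤ c.length * (i0 + 1) := by
    have := Nat.le_mul_of_pos_left (i0 + 1) hn
    omega
  have hkey : cyc c h.1 (i0 + (j + c.length * (i0 + 1) - i0)) = w := by
    have he : i0 + (j + c.length * (i0 + 1) - i0) = j + c.length * (i0 + 1) := by omega
    rw [he, cyc_add_mul h.1 j (i0 + 1)]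
    exact hj
  have hres := reach_from_exit h hloop i0 hi0 (j + c.length * (i0 + 1) - i0)
    (by rw [hkey]; exact hw)
  rwa [hkey] at hres

lemma exits_disconnected {c : List V} (h : IsEulerianCircuit E c) (hloop : ∀ x, ¬ E x x)
    (hA' : ∀ x, outdeg E x ≠ 0) {v y1 y2 : V} (hdeg : outdeg E v = 2)
    (h1 : E v y1) (h2 : E v y2) (hne : y1 ≠ y2)
    (hcut : IsCutNode (underlyingUG E) v) :
    ¬ Relation.ReflTransGen (Avoid E v) y1 y2 := by
  intro hr
  have hy1v : y1 ≠ v := fun e => hloop v (e ▸ h1)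
  refine not_cut hy1v ?_ hcut
  intro w hwv
  obtain ⟨y, hy, hyw⟩ := exit_reaches h hloop hA' v w hwv
  obtain ⟨a, b, hab, hset⟩ := Set.ncard_eq_two.mp hdeg
  have m0 : y = a ∨ y = b := by
    have : y ∈ ({a, b} : Set V) := hset ▸ (show y ∈ {w | E v w} from hy)
    simpa using this
  have m1 : y1 = a ∨ y1 = b := by
    have : y1 ∈ ({a, b} : Set V) := hset ▸ (show y1 ∈ {w | E v w} from h1)
    simpa using this
  have m2 : y2 = a ∨ y2 = b := by
    have : y2 ∈ ({a, b} : Set V) := hset ▸ (show y2 ∈ {w | E v w} from h2)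
    simpa using this
  have hy12 : y = y1 ∨ y = y2 := by
    rcases m0 with h0 | h0 <;> rcases m1 with hm1 | hm1 <;> rcases m2 with hm2 | hm2 <;>
      first
        | exact Or.inl (h0.trans hm1.symm)
        | exact Or.inr (h0.trans hm2.symm)
        | exact absurd (hm1.trans hm2.symm) hne
  rcases hy12 with rfl | rfl
  · exact rv_symm hyw
  · exact (rv_symm hyw).trans (rv_symm hr)

lemma mod_ne_window {a b n : ℕ} (hlt : a < b) (hwin : b - a < n) : a % n ≠ b % n := by
  intro hmod
  have hd : n ∣ b - a := (Nat.modEq_iff_dvd' (le_of_lt hlt)).mp hmod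
  have := Nat.le_of_dvd (by omega) hd
  omega

lemma succ_not_reach {c : List V} (h : IsEulerianCircuit E c) (hloop : ∀ x, ¬ E x x)
    (hA' : ∀ x, outdeg E x ≠ 0) {v : V} (i : ℕ) (hv : cyc c h.1 (i + 1) = v)
    (hdeg : outdeg E v = 2) (hcut : IsCutNode (underlyingUG E) v) :
    ¬ Relation.ReflTransGen (Avoid E v) (cyc c h.1 i) (cyc c h.1 (i + 2)) := by
  intro hcon
  have hn : 0 < c.length := List.length_pos_iff.mpr h.1
  have heu : E (cyc c h.1 i) v := by have := edge_cyc h i; rwa [hv] at this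
  have hez : E v (cyc c h.1 (i + 2)) := by
    have := edge_cyc h (i + 1); rwa [hv] at this
  have hu : cyc c h.1 i ≠ v := fun e => hloop v (e ▸ heu)
  have hz : cyc c h.1 (i + 2) ≠ v := fun e => hloop v (e ▸ hez)
  have hall : ∀ w, w ≠ v → Relation.ReflTransGen (Avoid E v) w (cyc c h.1 (i + 2)) := by
    intro w hw
    obtain ⟨j0, hj0lt, hj0⟩ := exists_cyc_eq h w (hA' w)
    have hD : i + 2 ≤ j0 + c.length * (i + 2) := by
      have := Nat.le_mul_of_pos_left (i + 2) hn
      omega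
    set D := j0 + c.length * (i + 2) - (i + 2) with hDdef
    set j := i + 2 + D % c.length with hjdef
    have hcycj : cyc c h.1 j = w := by
      have e1 : cyc c h.1 j = cyc c h.1 (i + 2 + D) := by
        refine cyc_congr h.1 ?_
        rw [Nat.add_mod (i + 2) (D % c.length), Nat.mod_mod_of_dvd _ dvd_rfl, ← Nat.add_mod]
      have e2 : i + 2 + D = j0 + c.length * (i + 2) := by omega
      rw [e1, e2, cyc_add_mul h.1 j0 (i + 2)]
      exact hj0
    have hmodlt := Nat.mod_lt D hn
    have hjlo : i + 2 ≤ j := by omega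
    have hjhi : j ≤ i + 1 + c.length := by omega
    have hjne : j ≠ i + 1 + c.length := by
      intro he
      apply hw
      rw [← hcycj, he, cyc_add_len h.1 (i + 1), hv]
    have hjn : j ≤ i + c.length := by omega
    by_cases hca : ∀ t, i + 2 ≤ t → t ≤ j → cyc c h.1 t ≠ v
    · have hs := stretch h hloop v (j - (i + 2)) (i + 2)
        (fun t ht1 ht2 => hca t ht1 (by omega))
      rw [show i + 2 + (j - (i + 2)) = j from by omega, hcycj] at hs
      exact rv_symm hs
    · by_cases hcb : ∀ t, j ≤ t → t ≤ i + c.length → cyc c h.1 t ≠ v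
      · have hs := stretch h hloop v (i + c.length - j) j
          (fun t ht1 ht2 => hcb t ht1 (by omega))
        rw [show j + (i + c.length - j) = i + c.length from by omega,
          cyc_add_len h.1 i, hcycj] at hs
        exact hs.trans hcon
      · exfalso
        push_neg at hca hcb
        obtain ⟨p, hp1, hp2, hpv⟩ := hca
        obtain ⟨q, hq1, hq2, hqv⟩ := hcb
        have hpj : p ≠ j := by
          intro e; rw [e] at hpv; exact hw (hcycj.symm.trans hpv)
        have hqj : q ≠ j := by
          intro e; rw [e] at hqv; exact hw (hcycj.symm.trans hqv)
        have hplt : p < j := lt_of_le_of_ne hp2 hpj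
        have hqgt : j < q := lt_of_le_of_ne hq1 (Ne.symm hqj)
        have hm1 : (i + 1) % c.length ≠ p % c.length := mod_ne_window (by omega) (by omega)
        have hm2 : (i + 1) % c.length ≠ q % c.length := mod_ne_window (by omega) (by omega)
        have hm3 : p % c.length ≠ q % c.length := mod_ne_window (by omega) (by omega)
        have d1 : cyc c h.1 (i + 1 + 1) ≠ cyc c h.1 (p + 1) :=
          cyc_succ_inj h hm1 (hv.trans hpv.symm)
        have d2 : cyc c h.1 (i + 1 + 1) ≠ cyc c h.1 (q + 1) :=
          cyc_succ_inj h hm2 (hv.trans hqv.symm)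
        have d3 : cyc c h.1 (p + 1) ≠ cyc c h.1 (q + 1) :=
          cyc_succ_inj h hm3 (hpv.trans hqv.symm)
        have d1' : cyc c h.1 (i + 2) ≠ cyc c h.1 (p + 1) := d1
        have d2' : cyc c h.1 (i + 2) ≠ cyc c h.1 (q + 1) := d2
        have hep : E v (cyc c h.1 (p + 1)) := by
          have := edge_cyc h p; rwa [hpv] at this
        have heqq : E v (cyc c h.1 (q + 1)) := by
          have := edge_cyc h q; rwa [hqv] at this
        obtain ⟨a, b, hab, hset⟩ := Set.ncard_eq_two.mp hdeg
        have m1 : cyc c h.1 (i + 2) = a ∨ cyc c h.1 (i + 2) = b := by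
          have : cyc c h.1 (i + 2) ∈ ({a, b} : Set V) :=
            hset ▸ (show _ ∈ {w | E v w} from hez)
          simpa using this
        have m2 : cyc c h.1 (p + 1) = a ∨ cyc c h.1 (p + 1) = b := by
          have : cyc c h.1 (p + 1) ∈ ({a, b} : Set V) :=
            hset ▸ (show _ ∈ {w | E v w} from hep)
          simpa using this
        have m3 : cyc c h.1 (q + 1) = a ∨ cyc c h.1 (q + 1) = b := by
          have : cyc c h.1 (q + 1) ∈ ({a, b} : Set V) :=
            hset ▸ (show _ ∈ {w | E v w} from heqq)
          simpa using this
        rcases m1 with e1 | e1 <;> rcases m2 with e2 | e2 <;> rcases m3 with e3 | e3 <;>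
          first
            | exact d1' (e1.trans e2.symm)
            | exact d2' (e1.trans e3.symm)
            | exact d3 (e2.trans e3.symm)
  exact not_cut hz hall hcut

end Reach
section Determine
variable {V : Type*} {E : V → V → Prop}

lemma succ_determined {c c' : List V}
    (h : IsEulerianCircuit E c) (h' : IsEulerianCircuit E c')
    (hloop : ∀ x, ¬ E x x) (hA : ∀ v, inA E v) (hA' : ∀ x, outdeg E x ≠ 0)
    (i i' : ℕ) (h0 : cyc c h.1 i = cyc c' h'.1 i')
    (h1 : cyc c h.1 (i + 1) = cyc c' h'.1 (i' + 1)) :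
    cyc c h.1 (i + 2) = cyc c' h'.1 (i' + 2) := by
  have hez : E (cyc c h.1 (i + 1)) (cyc c h.1 (i + 2)) := edge_cyc h (i + 1)
  have hez' : E (cyc c h.1 (i + 1)) (cyc c' h'.1 (i' + 2)) := by
    have := edge_cyc h' (i' + 1); rwa [← h1] at this
  rcases hA (cyc c h.1 (i + 1)) with hd | ⟨hd, hcut⟩
  · obtain ⟨a, hset⟩ := Set.ncard_eq_one.mp hd
    have e1 : cyc c h.1 (i + 2) ∈ ({a} : Set V) :=
      hset ▸ (show _ ∈ {w | E (cyc c h.1 (i + 1)) w} from hez)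
    have e2 : cyc c' h'.1 (i' + 2) ∈ ({a} : Set V) :=
      hset ▸ (show _ ∈ {w | E (cyc c h.1 (i + 1)) w} from hez')
    rw [Set.mem_singleton_iff] at e1 e2
    rw [e1, e2]
  · have heu : E (cyc c h.1 i) (cyc c h.1 (i + 1)) := edge_cyc h i
    have hu : cyc c h.1 i ≠ cyc c h.1 (i + 1) := by
      intro e; rw [e] at heu; exact hloop _ heu
    have hs1 : ¬ Relation.ReflTransGen (Avoid E (cyc c h.1 (i + 1)))
        (cyc c h.1 i) (cyc c h.1 (i + 2)) :=
      succ_not_reach h hloop hA' i rfl hd hcut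
    have hs2 : ¬ Relation.ReflTransGen (Avoid E (cyc c h.1 (i + 1)))
        (cyc c h.1 i) (cyc c' h'.1 (i' + 2)) := by
      have := succ_not_reach h' hloop hA' i' h1.symm hd hcut
      rwa [← h0] at this
    obtain ⟨y, hy, hyu⟩ := exit_reaches h hloop hA' (cyc c h.1 (i + 1)) (cyc c h.1 i) hu
    have hru : Relation.ReflTransGen (Avoid E (cyc c h.1 (i + 1))) (cyc c h.1 i) y :=
      rv_symm hyu
    have hyne1 : y ≠ cyc c h.1 (i + 2) := fun e => hs1 (e ▸ hru)
    have hyne2 : y ≠ cyc c' h'.1 (i' + 2) := fun e => hs2 (e ▸ hru)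
    obtain ⟨a, b, hab, hset⟩ := Set.ncard_eq_two.mp hd
    have m0 : y = a ∨ y = b := by
      have : y ∈ ({a, b} : Set V) :=
        hset ▸ (show y ∈ {w | E (cyc c h.1 (i + 1)) w} from hy)
      simpa using this
    have m1 : cyc c h.1 (i + 2) = a ∨ cyc c h.1 (i + 2) = b := by
      have : cyc c h.1 (i + 2) ∈ ({a, b} : Set V) :=
        hset ▸ (show _ ∈ {w | E (cyc c h.1 (i + 1)) w} from hez)
      simpa using this
    have m2 : cyc c' h'.1 (i' + 2) = a ∨ cyc c' h'.1 (i' + 2) = b := by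
      have : cyc c' h'.1 (i' + 2) ∈ ({a, b} : Set V) :=
        hset ▸ (show _ ∈ {w | E (cyc c h.1 (i + 1)) w} from hez')
      simpa using this
    rcases m0 with e0 | e0 <;> rcases m1 with e1 | e1 <;> rcases m2 with e2 | e2 <;>
      first
        | exact e1.trans e2.symm
        | exact absurd (e0.trans e1.symm) hyne1
        | exact absurd (e0.trans e2.symm) hyne2

lemma arb_nocycle {r : V} {T : Set (V × V)} (hT : IsArborescenceTowards E r T) :
    ∀ z, ¬ Relation.TransGen (fun a b => (a, b) ∈ T) z z := by
  intro z
  have hz := hT.2.2.2 z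
  induction hz using Relation.ReflTransGen.head_induction_on with
  | refl =>
      intro hcyc
      obtain ⟨w, hw, -⟩ := Relation.TransGen.head'_iff.mp hcyc
      exact hT.2.2.1 w hw
  | @head a cnode step tail ih =>
      intro hcyc
      obtain ⟨w, hw, hwa⟩ := Relation.TransGen.head'_iff.mp hcyc
      have hane : a ≠ r := by
        intro e; rw [e] at step; exact hT.2.2.1 _ step
      have hwc : w = cnode := by
        have hu := hT.2.1 a hane
        exact hu.unique hw step
      rw [hwc] at hwa
      exact ih (Relation.TransGen.tail' hwa step)

lemma arb_succ_reach (hloop : ∀ x, ¬ E x x) {r : V} {T : Set (V × V)}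
    (hT : IsArborescenceTowards E r T) {x y : V} (hx : x ≠ r) (hxy : (x, y) ∈ T) :
    Relation.ReflTransGen (Avoid E x) y r := by
  have hyr : Relation.ReflTransGen (fun a b => (a, b) ∈ T) y r := by
    have hxr := hT.2.2.2 x
    rcases Relation.ReflTransGen.cases_head hxr with heq | ⟨w, hw, hwr⟩
    · exact absurd heq hx
    · have : w = y := (hT.2.1 x hx).unique hw hxy
      exact this ▸ hwr
  have hyx : ¬ Relation.ReflTransGen (fun a b => (a, b) ∈ T) y x := by
    intro hyx
    exact arb_nocycle hT x (Relation.TransGen.head' hxy hyx)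
  have hyne : y ≠ x := by
    intro e
    rw [e] at hxy
    exact hloop x (hT.1 _ hxy)
  suffices hgen : ∀ z, Relation.ReflTransGen (fun a b => (a, b) ∈ T) z r → z ≠ x →
      ¬ Relation.ReflTransGen (fun a b => (a, b) ∈ T) z x →
      Relation.ReflTransGen (Avoid E x) z r from hgen y hyr hyne hyx
  intro z hz
  induction hz using Relation.ReflTransGen.head_induction_on with
  | refl => exact fun _ _ => Relation.ReflTransGen.refl
  | @head a cnode step tail ih =>
      intro hax hnax
      have hcx : cnode ≠ x := by
        intro e
        exact hnax (e ▸ Relation.ReflTransGen.single step)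
      have hncx : ¬ Relation.ReflTransGen (fun a b => (a, b) ∈ T) cnode x := by
        intro hc
        exact hnax (Relation.ReflTransGen.head step hc)
      have hE : E a cnode := hT.1 _ step
      have hne : a ≠ cnode := by
        intro e; rw [e] at hE; exact hloop _ hE
      exact Relation.ReflTransGen.head ⟨hax, hcx, hne, Or.inl hE⟩ (ih hcx hncx)

lemma arb_succ_eq {c : List V} (h : IsEulerianCircuit E c) (hloop : ∀ x, ¬ E x x)
    (hA : ∀ v, inA E v) (hA' : ∀ x, outdeg E x ≠ 0)
    {r x y y' : V} {T T' : Set (V × V)}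
    (hT : IsArborescenceTowards E r T) (hT' : IsArborescenceTowards E r T')
    (hx : x ≠ r) (h1 : (x, y) ∈ T) (h2 : (x, y') ∈ T') : y = y' := by
  have hy : E x y := hT.1 _ h1
  have hy' : E x y' := hT'.1 _ h2
  rcases hA x with hd | ⟨hd, hcut⟩
  · obtain ⟨a, hset⟩ := Set.ncard_eq_one.mp hd
    have e1 : y ∈ ({a} : Set V) := hset ▸ (show y ∈ {w | E x w} from hy)
    have e2 : y' ∈ ({a} : Set V) := hset ▸ (show y' ∈ {w | E x w} from hy')
    rw [Set.mem_singleton_iff] at e1 e2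
    rw [e1, e2]
  · by_contra hne
    have r1 := arb_succ_reach hloop hT hx h1
    have r2 := arb_succ_reach hloop hT' hx h2
    exact exits_disconnected h hloop hA' hd hy hy' hne hcut (r1.trans (rv_symm r2))

lemma arb_subset {c : List V} (h : IsEulerianCircuit E c) (hloop : ∀ x, ¬ E x x)
    (hA : ∀ v, inA E v) (hA' : ∀ x, outdeg E x ≠ 0)
    {r : V} {T T' : Set (V × V)}
    (hT : IsArborescenceTowards E r T) (hT' : IsArborescenceTowards E r T') :
    T ⊆ T' := by
  rintro ⟨x, y⟩ hp
  have hx : x ≠ r := by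
    intro e; rw [e] at hp; exact hT.2.2.1 y hp
  obtain ⟨y', hy', -⟩ := hT'.2.1 x hx
  have := arb_succ_eq h hloop hA hA' hT hT' hx hp hy'
  rw [this]
  exact hy'

end Determine
section ArbExists
variable {V : Type*} {E : V → V → Prop}

lemma arb_exists {c : List V} (h : IsEulerianCircuit E c) (hA' : ∀ x, outdeg E x ≠ 0)
    {r : V} (hr : cyc c h.1 0 = r) : ∃ T, IsArborescenceTowards E r T := by
  classical
  have hn : 0 < c.length := List.length_pos_iff.mpr h.1
  set fG : V → ℕ := fun x => Nat.findGreatest (fun s => cyc c h.1 s = x) (c.length - 1)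
    with hfG
  set T : Set (V × V) := {p | p.1 ≠ r ∧ ∃ t, t < c.length ∧ cyc c h.1 t = p.1 ∧
      cyc c h.1 (t + 1) = p.2 ∧ ∀ s, t < s → s < c.length → cyc c h.1 s ≠ p.1} with hTdef
  have hmem : ∀ p : V × V, p ∈ T ↔ (p.1 ≠ r ∧ ∃ t, t < c.length ∧ cyc c h.1 t = p.1 ∧
      cyc c h.1 (t + 1) = p.2 ∧ ∀ s, t < s → s < c.length → cyc c h.1 s ≠ p.1) :=
    fun p => Iff.rfl
  have hflt : ∀ x, fG x < c.length := by
    intro x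
    have h1 := Nat.findGreatest_le (P := fun s => cyc c h.1 s = x) (c.length - 1)
    have h2 : fG x = Nat.findGreatest (fun s => cyc c h.1 s = x) (c.length - 1) := rfl
    omega
  have hspec : ∀ x, cyc c h.1 (fG x) = x := by
    intro x
    obtain ⟨t0, ht0, hgt0⟩ := exists_cyc_eq h x (hA' x)
    exact Nat.findGreatest_spec (P := fun s => cyc c h.1 s = x) (m := t0) (show t0 ≤ c.length - 1 by omega) hgt0
  have hgreat : ∀ x s, fG x < s → s < c.length → cyc c h.1 s ≠ x := by
    intro x s h1 h2
    exact Nat.findGreatest_is_greatest h1 (by omega)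
  refine ⟨T, ?_, ?_, ?_, ?_⟩
  · rintro ⟨x, y⟩ ⟨-, t, -, h1, h2, -⟩
    have := edge_cyc h t
    rwa [h1, h2] at this
  · intro x hx
    refine ⟨cyc c h.1 (fG x + 1), ⟨hx, fG x, hflt x, hspec x, rfl, fun s a b => hgreat x s a b⟩, ?_⟩
    rintro y ⟨-, t', ht', h1', h2', hlast'⟩
    have h2'' : cyc c h.1 (t' + 1) = y := h2'
    have h1'' : cyc c h.1 t' = x := h1'
    have hlast'' : ∀ s, t' < s → s < c.length → cyc c h.1 s ≠ x := hlast'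
    have he : t' = fG x := by
      by_contra hne
      rcases Nat.lt_or_ge t' (fG x) with hlt | hge
      · exact hlast'' _ hlt (hflt x) (hspec x)
      · exact hgreat x t' (lt_of_le_of_ne hge (Ne.symm hne)) ht' h1''
    rw [← h2'', he]
  · intro y hy
    exact hy.1 rfl
  · have claim : ∀ m t, t < c.length → c.length - t ≤ m →
        (∀ s, t < s → s < c.length → cyc c h.1 s ≠ cyc c h.1 t) →
        Relation.ReflTransGen (fun a b => (a, b) ∈ T) (cyc c h.1 t) r := by
      intro m
      induction m with
      | zero => intro t ht hm _; omega
      | succ m ih =>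
          intro t ht hm hlast
          by_cases hgr : cyc c h.1 t = r
          · rw [hgr]
          · have hedge : (cyc c h.1 t, cyc c h.1 (t + 1)) ∈ T :=
              ⟨hgr, t, ht, rfl, rfl, hlast⟩
            by_cases hT1 : t + 1 = c.length
            · have hr2 : cyc c h.1 (t + 1) = r := by
                rw [hT1, ← hr]
                exact cyc_congr h.1 (by simp)
              exact Relation.ReflTransGen.single (hr2 ▸ hedge)
            · have hocc : t + 1 ≤ c.length - 1 := by omega
              have hspec2 : cyc c h.1 (fG (cyc c h.1 (t + 1))) = cyc c h.1 (t + 1) :=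
                hspec _
              have hge2 : t + 1 ≤ fG (cyc c h.1 (t + 1)) := Nat.le_findGreatest hocc rfl
              have hlt2 : fG (cyc c h.1 (t + 1)) < c.length := hflt _
              have ihres := ih (fG (cyc c h.1 (t + 1))) hlt2 (by omega)
                (fun s a b heq => hgreat _ s a b (heq.trans hspec2))
              exact Relation.ReflTransGen.head hedge (hspec2 ▸ ihres)
    intro x
    by_cases hxr : x = r
    · rw [hxr]
    · have hres := claim c.length (fG x) (hflt x) (by omega)
        (fun s a b heq => hgreat x s a b (heq.trans (hspec x)))
      rwa [hspec x] at hres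

end ArbExists

/-- If every node is in `A(G)`, then `G` has exactly one Eulerian circuit up to cyclic
rotation; in particular (via the BEST theorem formula), `t(G) = 1` and
`(d(v) - 1)! = 1` for every node `v`. -/
theorem A_eq_V_unique_circuit_BEST {V : Type*} [Fintype V] (E : V → V → Prop)
    (hloop : ∀ x : V, ¬ E x x) (hconn : (underlyingUG E).Connected)
    (heul : ∃ c : List V, IsEulerianCircuit E c)
    (hA : ∀ v : V, inA E v) :
    (∃ c : List V, IsEulerianCircuit E c ∧
        ∀ c' : List V, IsEulerianCircuit E c' → ∃ k : ℕ, c' = c.rotate k) ∧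
    (∀ r : V, ∃! T : Set (V × V), IsArborescenceTowards E r T) ∧
    ∀ v : V, Nat.factorial (outdeg E v - 1) = 1 := by
  classical
  obtain ⟨c, hc⟩ := heul
  have hA' : ∀ x : V, outdeg E x ≠ 0 := by
    intro x; rcases hA x with h | ⟨h, -⟩ <;> omega
  have hnpos : 0 < c.length := List.length_pos_iff.mpr hc.1
  refine ⟨⟨c, hc, ?_⟩, ?_, ?_⟩
  · intro c' hc'
    have hlen : c'.length = c.length := euler_length_eq hc' hc
    have he0 : E (cyc c' hc'.1 0) (cyc c' hc'.1 1) := edge_cyc hc' 0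
    obtain ⟨k, hk, e0, e1⟩ := (edge_iff hc _ _).mp he0
    have key : ∀ t, cyc c' hc'.1 t = cyc c hc.1 (k + t) ∧
        cyc c' hc'.1 (t + 1) = cyc c hc.1 (k + t + 1) := by
      intro t
      induction t with
      | zero => exact ⟨e0, e1⟩
      | succ t ih =>
          refine ⟨ih.2, ?_⟩
          have hstep := succ_determined hc hc' hloop hA hA' (k + t) t ih.1.symm ih.2.symm
          exact hstep.symm
    refine ⟨k, ?_⟩
    apply List.ext_getElem (by simp [hlen])
    intro t h1 h2
    have l1 : c'[t] = cyc c' hc'.1 t := by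
      simp [cyc, List.get_eq_getElem, Nat.mod_eq_of_lt h1]
    have l2 : (c.rotate k)[t] = cyc c hc.1 (t + k) := by
      rw [List.getElem_rotate]
      simp [cyc, List.get_eq_getElem]
    rw [l1, l2, (key t).1, Nat.add_comm k t]
  · intro r
    obtain ⟨i0, hi0lt, hi0⟩ := exists_cyc_eq hc r (hA' r)
    have h3 : IsEulerianCircuit E (c.rotate i0) := euler_rotate hc i0
    have hg0 : cyc (c.rotate i0) h3.1 0 = r := by
      rw [cyc_rotate hc.1 i0 h3.1 0]
      simpa using hi0
    obtain ⟨T, hT⟩ := arb_exists h3 hA' hg0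
    exact ⟨T, hT, fun T' hT' => Set.Subset.antisymm
      (arb_subset hc hloop hA hA' hT' hT) (arb_subset hc hloop hA hA' hT hT')⟩
  · intro v
    rcases hA v with hh | ⟨hh, -⟩ <;> rw [hh] <;> rfl
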